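/- arXiv:1609.05661 — 2 statements merged into one kernel-verified Lean document; each statement's English description precedes it below -/
import Mathlib

section
/- Let Ω be a finite nonempty set. A functional P̲ : (Ω → ℝ) → ℝ satisfies (P1) P̲(f) ≥ min_{x∈Ω} f(x) for all f, (P2) P̲(λf) = λ·P̲(f) for all f and all λ ≥ 0, and (P3) P̲(f + g) ≥ P̲(f) + P̲(g) for all f, g, if and only if there exists a nonempty compact convex set M of probability mass vectors on Ω such that P̲(f) = min_{p∈M} ⟨p, f⟩ for every gamble f. -/
open scoped BigOperators

/-- Inner product of gambles: `⟨f,g⟩ = ∑ x, f x * g x`. -/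
noncomputable def ip {Ω : Type*} [Fintype Ω] (f g : Ω → ℝ) : ℝ := ∑ x, f x * g x

/-- A probability mass vector on `Ω`. -/
def IsPMV {Ω : Type*} [Fintype Ω] (p : Ω → ℝ) : Prop :=
  (∀ x, 0 ≤ p x) ∧ ∑ x, p x = 1

section Aux

variable {Ω : Type*} [Fintype Ω]

lemma ip_add_right (p f g : Ω → ℝ) : ip p (f + g) = ip p f + ip p g := by
  simp [ip, mul_add, Finset.sum_add_distrib]

lemma ip_smul_right (p f : Ω → ℝ) (l : ℝ) : ip p (l • f) = l * ip p f := by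
  simp [ip, Finset.mul_sum, mul_left_comm]

lemma ip_ge_min [Nonempty Ω] (p f : Ω → ℝ) (hp : IsPMV p) :
    Finset.univ.inf' Finset.univ_nonempty f ≤ ip p f := by
  set m := Finset.univ.inf' Finset.univ_nonempty f with hm
  calc m = (∑ x, p x) * m := by rw [hp.2, one_mul]
    _ = ∑ x, p x * m := by rw [Finset.sum_mul]
    _ ≤ ∑ x, p x * f x :=
      Finset.sum_le_sum fun x _ =>
        mul_le_mul_of_nonneg_left (Finset.inf'_le _ (Finset.mem_univ x)) (hp.1 x)
    _ = ip p f := rfl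

lemma key [Nonempty Ω] (lP : (Ω → ℝ) → ℝ)
    (hP1 : ∀ f : Ω → ℝ, Finset.univ.inf' Finset.univ_nonempty f ≤ lP f)
    (hP2 : ∀ (f : Ω → ℝ) (l : ℝ), 0 ≤ l → lP (l • f) = l * lP f)
    (hP3 : ∀ f g : Ω → ℝ, lP f + lP g ≤ lP (f + g))
    (f₀ : Ω → ℝ) (hf₀ : f₀ ≠ 0) :
    ∃ p : Ω → ℝ, IsPMV p ∧ (∀ g, lP g ≤ ip p g) ∧ ip p f₀ = lP f₀ := by
  classical
  have lP0 : lP 0 = 0 := by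
    have := hP2 0 0 le_rfl
    simpa using this
  set N : (Ω → ℝ) → ℝ := fun g => -lP (-g) with hN
  have hN_hom : ∀ c : ℝ, 0 < c → ∀ x : Ω → ℝ, N (c • x) = c * N x := by
    intro c hc x
    have h1 : -(c • x) = c • (-x) := by rw [smul_neg]
    simp only [hN, h1, hP2 (-x) c hc.le]
    ring
  have hN_add : ∀ x y : Ω → ℝ, N (x + y) ≤ N x + N y := by
    intro x y
    have h1 : -x + -y = -(x + y) := by abel
    have := hP3 (-x) (-y)
    rw [h1] at this
    simp only [hN]
    linarith
  have hlPN : ∀ x : Ω → ℝ, lP x ≤ N x := by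
    intro x
    have h1 : x + -x = 0 := by abel
    have := hP3 x (-x)
    rw [h1, lP0] at this
    simp only [hN]
    linarith
  set F := LinearPMap.mkSpanSingleton (K := ℝ) (σ := RingHom.id ℝ) f₀ (lP f₀) hf₀ with hF
  have hf : ∀ z : F.domain, F z ≤ N z := by
    rintro ⟨z, hz⟩
    obtain ⟨c, rfl⟩ := Submodule.mem_span_singleton.mp hz
    have hFz : F ⟨c • f₀, hz⟩ = c • lP f₀ := LinearPMap.mkSpanSingleton'_apply _ _ _ c _
    rw [hFz]
    rcases lt_trichotomy c 0 with hc | hc | hc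
    · have : N (c • f₀) = c * lP f₀ := by
        have h1 : -(c • f₀) = (-c) • f₀ := by rw [neg_smul]
        simp only [hN, h1, hP2 f₀ (-c) (by linarith)]
        ring
      simp [this, smul_eq_mul]
    · subst hc
      simp only [zero_smul, smul_eq_mul, zero_mul, hN, neg_zero, lP0]
      simp [lP0]
    · have h2 : N (c • f₀) = c * N f₀ := hN_hom c hc f₀
      have h3 : lP f₀ ≤ N f₀ := hlPN f₀
      rw [h2, smul_eq_mul]
      exact mul_le_mul_of_nonneg_left h3 hc.le
  obtain ⟨g, hg1, hg2⟩ := exists_extension_of_le_sublinear F N hN_hom hN_add hf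
  have g_ge : ∀ x : Ω → ℝ, lP x ≤ g x := by
    intro x
    have h := hg2 (-x)
    rw [map_neg] at h
    have hNx : N (-x) = -lP x := by simp [hN]
    rw [hNx] at h
    linarith
  have gf₀ : g f₀ = lP f₀ := by
    have h := hg1 ⟨f₀, Submodule.mem_span_singleton_self f₀⟩
    rw [h]
    exact LinearPMap.mkSpanSingleton_apply ℝ ℝ hf₀ (lP f₀)
  set p : Ω → ℝ := fun x => g (Pi.single x 1) with hp
  have rep : ∀ h : Ω → ℝ, g h = ip p h := by
    intro h
    conv_lhs => rw [← Finset.univ_sum_single h]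
    rw [map_sum]
    simp only [ip]
    refine Finset.sum_congr rfl fun x _ => ?_
    have hsingle : Pi.single x (h x) = h x • (Pi.single x 1 : Ω → ℝ) := by
      rw [← Pi.single_smul, smul_eq_mul, mul_one]
    rw [hsingle, map_smul, smul_eq_mul, hp, mul_comm]
  have hnonneg : ∀ x, 0 ≤ p x := by
    intro x
    have h1 : (0 : ℝ) ≤ Finset.univ.inf' Finset.univ_nonempty (Pi.single x (1 : ℝ)) := by
      refine Finset.le_inf' _ _ fun y _ => ?_
      rcases eq_or_ne y x with h | h <;> simp [Pi.single_apply, h]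
    exact le_trans h1 (le_trans (hP1 _) (g_ge _))
  have hone : g (fun _ => (1 : ℝ)) = 1 := by
    have hlow : (1 : ℝ) ≤ g (fun _ => (1 : ℝ)) := by
      have h1 := hP1 (fun _ => (1 : ℝ))
      rw [Finset.inf'_const] at h1
      exact le_trans h1 (g_ge _)
    have hup : g (fun _ => (1 : ℝ)) ≤ 1 := by
      have h := hg2 (fun _ => (1 : ℝ))
      have hN1 : N (fun _ => (1 : ℝ)) ≤ 1 := by
        have h2 := hP1 (fun _ => (-1 : ℝ))
        rw [Finset.inf'_const] at h2
        have h3 : (-(fun _ => (1 : ℝ)) : Ω → ℝ) = fun _ => (-1 : ℝ) := by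
          funext y; simp
        simp only [hN, h3]
        linarith
      linarith
    linarith
  have hsum : ∑ x, p x = 1 := by
    have h1 : g (fun _ => (1 : ℝ)) = ∑ x, p x := by
      rw [rep]
      simp [ip]
    rw [← h1, hone]
  refine ⟨p, ⟨hnonneg, hsum⟩, fun h => by rw [← rep]; exact g_ge h, by rw [← rep]; exact gf₀⟩

end Aux

/-- a functional on gambles satisfies (P1)–(P3) iff it is the lower envelope
(with attained minima) of a nonempty compact convex set of probability mass vectors. -/
theorem stmt6 {Ω : Type*} [Fintype Ω] [Nonempty Ω] (lP : (Ω → ℝ) → ℝ) :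
    ((∀ f : Ω → ℝ, Finset.univ.inf' Finset.univ_nonempty f ≤ lP f) ∧
     (∀ (f : Ω → ℝ) (l : ℝ), 0 ≤ l → lP (l • f) = l * lP f) ∧
     (∀ f g : Ω → ℝ, lP f + lP g ≤ lP (f + g))) ↔
    ∃ M : Set (Ω → ℝ), M.Nonempty ∧ IsCompact M ∧ Convex ℝ M ∧
      (∀ p ∈ M, IsPMV p) ∧ ∀ f : Ω → ℝ, IsLeast {r : ℝ | ∃ p ∈ M, r = ip p f} (lP f) := by
  constructor
  · rintro ⟨hP1, hP2, hP3⟩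
    have lP0 : lP 0 = 0 := by
      have := hP2 0 0 le_rfl
      simpa using this
    set M : Set (Ω → ℝ) := {p | IsPMV p ∧ ∀ g, lP g ≤ ip p g} with hM
    have hone_ne : (fun _ => (1 : ℝ) : Ω → ℝ) ≠ 0 := by
      intro h
      have := congrFun h (Classical.arbitrary Ω)
      norm_num at this
    have keyall : ∀ f : Ω → ℝ, ∃ p ∈ M, ip p f = lP f := by
      intro f
      by_cases hf : f = 0
      · obtain ⟨p, hp1, hp2, -⟩ := key lP hP1 hP2 hP3 (fun _ => (1 : ℝ)) hone_ne
        exact ⟨p, ⟨hp1, hp2⟩, by subst hf; simp [ip, lP0]⟩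
      · obtain ⟨p, hp1, hp2, hp3⟩ := key lP hP1 hP2 hP3 f hf
        exact ⟨p, ⟨hp1, hp2⟩, hp3⟩
    have hsub : M ⊆ Set.Icc (0 : Ω → ℝ) 1 := by
      rintro p ⟨⟨hp0, hp1⟩, -⟩
      refine ⟨fun x => hp0 x, fun x => ?_⟩
      calc p x ≤ ∑ y, p y := Finset.single_le_sum (fun y _ => hp0 y) (Finset.mem_univ x)
        _ = 1 := hp1
    have hclosed : IsClosed M := by
      have hMeq : M = (⋂ x, {p : Ω → ℝ | 0 ≤ p x}) ∩
          ({p : Ω → ℝ | ∑ x, p x = 1} ∩ ⋂ g, {p : Ω → ℝ | lP g ≤ ip p g}) := by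
        ext p
        simp only [hM, Set.mem_setOf_eq, Set.mem_inter_iff, Set.mem_iInter, IsPMV]
        tauto
      rw [hMeq]
      refine (isClosed_iInter fun x =>
          isClosed_le continuous_const (continuous_apply x)).inter (IsClosed.inter ?_ ?_)
      · exact isClosed_eq (continuous_finset_sum _ fun x _ => continuous_apply x) continuous_const
      · refine isClosed_iInter fun g => isClosed_le continuous_const ?_
        exact continuous_finset_sum _ fun x _ => (continuous_apply x).mul continuous_const
    have hcompact : IsCompact M := (isCompact_Icc).of_isClosed_subset hclosed hsub
    have hconv : Convex ℝ M := by
      rintro p ⟨⟨hp0, hp1⟩, hpd⟩ q ⟨⟨hq0, hq1⟩, hqd⟩ a b ha hb hab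
      have hipcomb : ∀ g : Ω → ℝ, ip (a • p + b • q) g = a * ip p g + b * ip q g := by
        intro g
        simp [ip, add_mul, Finset.sum_add_distrib, Finset.mul_sum, mul_assoc]
      refine ⟨⟨fun x => ?_, ?_⟩, fun g => ?_⟩
      · exact add_nonneg (mul_nonneg ha (hp0 x)) (mul_nonneg hb (hq0 x))
      · simp [Finset.sum_add_distrib, ← Finset.mul_sum, hp1, hq1, hab]
      · rw [hipcomb]
        have h1 : a * lP g ≤ a * ip p g := mul_le_mul_of_nonneg_left (hpd g) ha
        have h2 : b * lP g ≤ b * ip q g := mul_le_mul_of_nonneg_left (hqd g) hb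
        have h3 : lP g = a * lP g + b * lP g := by rw [← add_mul, hab, one_mul]
        linarith
    obtain ⟨p₀, hp₀, -⟩ := keyall 0
    refine ⟨M, ⟨p₀, hp₀⟩, hcompact, hconv, fun p hp => hp.1, fun f => ?_⟩
    constructor
    · obtain ⟨p, hpM, hpf⟩ := keyall f
      exact ⟨p, hpM, hpf.symm⟩
    · rintro r ⟨p, hpM, rfl⟩
      exact hpM.2 f
  · rintro ⟨M, hne, hcomp, hconv, hpmv, hleast⟩
    refine ⟨fun f => ?_, fun f l hl => ?_, fun f g => ?_⟩
    · obtain ⟨p, hpM, hpf⟩ := (hleast f).1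
      rw [hpf]
      exact ip_ge_min p f (hpmv p hpM)
    · have h1 := hleast f
      have h2 := hleast (l • f)
      have h3 : IsLeast {r : ℝ | ∃ p ∈ M, r = ip p (l • f)} (l * lP f) := by
        constructor
        · obtain ⟨p, hpM, hpf⟩ := h1.1
          exact ⟨p, hpM, by rw [ip_smul_right, ← hpf]⟩
        · rintro r ⟨p, hpM, rfl⟩
          rw [ip_smul_right]
          exact mul_le_mul_of_nonneg_left (h1.2 ⟨p, hpM, rfl⟩) hl
      exact h2.unique h3
    · obtain ⟨p, hpM, hpf⟩ := (hleast (f + g)).1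
      rw [hpf, ip_add_right]
      exact add_le_add ((hleast f).2 ⟨p, hpM, rfl⟩) ((hleast g).2 ⟨p, hpM, rfl⟩)
end

section
/- Let Ω, K, b, M, E̲ and the faces M_f be as in the setting of a coherent assessment with K nonempty, and let P̲ be an extension of (K, b). Then d(P̲, E̲) ≤ max_{E ∈ ext(M)} min_{f ∈ K} max_{F ∈ ext(M_f)} ‖E − F‖, where d(P̲, E̲) = sup_{h ≠ 0} |P̲(h) − E̲(h)|/‖h‖, ext(M) is the set of extreme points of M, and ‖E − F‖ is the Euclidean distance between the probability mass vectors E and F. -/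
open scoped BigOperators ENNReal

/-- Euclidean norm of a gamble. -/
noncomputable def nrm {Ω : Type*} [Fintype Ω] (f : Ω → ℝ) : ℝ := Real.sqrt (ip f f)

/-- The distance between two real-valued functionals on gambles:
`d(F, G) = sup_{h ≠ 0} |F(h) − G(h)|/‖h‖`, a supremum in `[0, ∞]`. -/
noncomputable def dLP {Ω : Type*} [Fintype Ω] (F G : (Ω → ℝ) → ℝ) : ℝ≥0∞ :=
  ⨆ h ∈ {h : Ω → ℝ | h ≠ 0}, ENNReal.ofReal (|F h - G h| / nrm h)

section helpers
variable {Ω : Type*} [Fintype Ω]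

lemma ip_self_nonneg (f : Ω → ℝ) : 0 ≤ ip f f :=
  Finset.sum_nonneg fun x _ => mul_self_nonneg _

lemma nrm_nonneg (f : Ω → ℝ) : 0 ≤ nrm f := Real.sqrt_nonneg _

lemma nrm_pos_of_ne (f : Ω → ℝ) (h : f ≠ 0) : 0 < nrm f := by
  rw [nrm, Real.sqrt_pos]
  obtain ⟨x, hx⟩ := Function.ne_iff.1 h
  exact Finset.sum_pos' (fun y _ => mul_self_nonneg _)
    ⟨x, Finset.mem_univ x, mul_self_pos.2 hx⟩

lemma ip_add_left (p q h : Ω → ℝ) : ip (p + q) h = ip p h + ip q h := by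
  simp [ip, add_mul, Finset.sum_add_distrib]

lemma ip_smul_left (c : ℝ) (p h : Ω → ℝ) : ip (c • p) h = c * ip p h := by
  simp [ip, Finset.mul_sum, mul_assoc]

lemma ip_sub_left (p q h : Ω → ℝ) : ip (p - q) h = ip p h - ip q h := by
  simp [ip, sub_mul, Finset.sum_sub_distrib]

lemma ip_cs (f g : Ω → ℝ) : ip f g ≤ nrm f * nrm g := by
  have h := Finset.sum_mul_sq_le_sq_mul_sq Finset.univ f g
  have h1 : ip f g ≤ Real.sqrt ((∑ x, f x ^ 2) * ∑ x, g x ^ 2) := by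
    calc ip f g ≤ |ip f g| := le_abs_self _
    _ = Real.sqrt ((ip f g) ^ 2) := (Real.sqrt_sq_eq_abs _).symm
    _ ≤ _ := Real.sqrt_le_sqrt h
  calc ip f g ≤ _ := h1
  _ = nrm f * nrm g := by
      rw [Real.sqrt_mul (Finset.sum_nonneg fun x _ => sq_nonneg _)]
      simp [nrm, ip, sq]

lemma nrm_sub_comm (p q : Ω → ℝ) : nrm (p - q) = nrm (q - p) := by
  unfold nrm ip
  congr 1
  refine Finset.sum_congr rfl fun x _ => ?_
  simp only [Pi.sub_apply]; ring

lemma continuous_ip_right (g : Ω → ℝ) : Continuous fun p : Ω → ℝ => ip p g := by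
  unfold ip
  exact continuous_finset_sum _ fun x _ => (continuous_apply x).mul continuous_const

lemma continuous_nrm_sub (E : Ω → ℝ) : Continuous fun z : Ω → ℝ => nrm (E - z) := by
  simp only [nrm, ip, Pi.sub_apply]
  exact Real.continuous_sqrt.comp <| continuous_finset_sum _ fun x _ =>
    (continuous_const.sub (continuous_apply x)).mul (continuous_const.sub (continuous_apply x))

lemma nrm_add_le (u v : Ω → ℝ) : nrm (u + v) ≤ nrm u + nrm v := by
  have hexp : ip (u + v) (u + v) = ip u u + 2 * ip u v + ip v v := by
    simp only [ip, Pi.add_apply]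
    rw [Finset.mul_sum, ← Finset.sum_add_distrib, ← Finset.sum_add_distrib]
    exact Finset.sum_congr rfl fun x _ => by ring
  have h1 : ip u u = nrm u ^ 2 := (Real.sq_sqrt (ip_self_nonneg u)).symm
  have h2 : ip v v = nrm v ^ 2 := (Real.sq_sqrt (ip_self_nonneg v)).symm
  have hcs := ip_cs u v
  have : ip (u + v) (u + v) ≤ (nrm u + nrm v) ^ 2 := by rw [hexp]; nlinarith
  calc nrm (u + v) = Real.sqrt (ip (u + v) (u + v)) := rfl
  _ ≤ Real.sqrt ((nrm u + nrm v) ^ 2) := Real.sqrt_le_sqrt this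
  _ = nrm u + nrm v := Real.sqrt_sq (add_nonneg (nrm_nonneg u) (nrm_nonneg v))

lemma nrm_smul (c : ℝ) (u : Ω → ℝ) : nrm (c • u) = |c| * nrm u := by
  have : ip (c • u) (c • u) = c ^ 2 * ip u u := by
    simp only [ip, Pi.smul_apply, smul_eq_mul, Finset.mul_sum]
    exact Finset.sum_congr rfl fun x _ => by ring
  rw [nrm, this, Real.sqrt_mul (sq_nonneg c), Real.sqrt_sq_eq_abs]; rfl

lemma convex_nrm_ball (E : Ω → ℝ) (r : ℝ) : Convex ℝ {z : Ω → ℝ | nrm (E - z) ≤ r} := by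
  intro z1 h1 z2 h2 c d hc hd hcd
  simp only [Set.mem_setOf_eq] at *
  have key : E - (c • z1 + d • z2) = c • (E - z1) + d • (E - z2) := by
    ext x
    simp only [Pi.sub_apply, Pi.add_apply, Pi.smul_apply, smul_eq_mul]
    linear_combination (E x) * hcd.symm
  calc nrm (E - (c • z1 + d • z2)) = nrm (c • (E - z1) + d • (E - z2)) := by rw [key]
  _ ≤ nrm (c • (E - z1)) + nrm (d • (E - z2)) := nrm_add_le _ _
  _ = c * nrm (E - z1) + d * nrm (E - z2) := by
      rw [nrm_smul, nrm_smul, abs_of_nonneg hc, abs_of_nonneg hd]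
  _ ≤ c * r + d * r :=
      add_le_add (mul_le_mul_of_nonneg_left h1 hc) (mul_le_mul_of_nonneg_left h2 hd)
  _ = r := by linear_combination r * hcd

end helpers

/-- for any extension `P̲` of a coherent assessment `(K, b)`,
`d(P̲, E̲) ≤ max_{E ∈ ext(M)} min_{f ∈ K} max_{F ∈ ext(M_f)} ‖E − F‖`. -/
theorem stmt16 {Ω : Type*} [Fintype Ω] [Nonempty Ω]
    (K : Finset (Ω → ℝ)) (hK : K.Nonempty) (b : (Ω → ℝ) → ℝ)
    (M : Set (Ω → ℝ)) (hM : M = {p | IsPMV p ∧ ∀ g ∈ K, b g ≤ ip p g})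
    (hMne : M.Nonempty)
    (lE : (Ω → ℝ) → ℝ)
    (hlE : ∀ h : Ω → ℝ, IsLeast {r : ℝ | ∃ p ∈ M, r = ip p h} (lE h))
    (hcoh : ∀ g ∈ K, lE g = b g)
    (M' : Set (Ω → ℝ)) (hne' : M'.Nonempty) (hcomp' : IsCompact M')
    (hconv' : Convex ℝ M') (hpmv' : ∀ p ∈ M', IsPMV p)
    (lP : (Ω → ℝ) → ℝ)
    (hlP : ∀ h : Ω → ℝ, IsLeast {r : ℝ | ∃ p ∈ M', r = ip p h} (lP h))
    (hb' : ∀ g ∈ K, lP g = b g) :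
    dLP lP lE ≤
      ⨆ E ∈ Set.extremePoints ℝ M, ⨅ f ∈ K,
        ⨆ F ∈ Set.extremePoints ℝ {q ∈ M | ip q f = lE f},
          ENNReal.ofReal (nrm (E - F)) := by
  classical
  -- M' ⊆ M
  have hM'M : M' ⊆ M := by
    intro p hp
    rw [hM]
    refine ⟨hpmv' p hp, fun g hg => ?_⟩
    rw [← hb' g hg]
    exact (hlP g).2 ⟨p, hp, rfl⟩
  -- M is closed
  have hMclosed : IsClosed M := by
    have : M = (⋂ x, {p : Ω → ℝ | 0 ≤ p x}) ∩ ({p | ∑ x, p x = 1} ∩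
        ⋂ g ∈ K, {p | b g ≤ ip p g}) := by
      rw [hM]; ext p
      simp only [Set.mem_setOf_eq, Set.mem_inter_iff, Set.mem_iInter, IsPMV]
      tauto
    rw [this]
    refine IsClosed.inter (isClosed_iInter fun x =>
      isClosed_le continuous_const (continuous_apply x)) (IsClosed.inter ?_ ?_)
    · exact isClosed_eq (continuous_finset_sum _ fun x _ => continuous_apply x) continuous_const
    · exact isClosed_biInter fun g _ => isClosed_le continuous_const (continuous_ip_right g)
  -- M is compact
  have hMcpt : IsCompact M := by
    refine (isCompact_univ_pi fun _ : Ω => isCompact_Icc (a := (0:ℝ)) (b := 1)).of_isClosed_subset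
      hMclosed ?_
    intro p hp
    rw [hM] at hp
    intro x _
    refine ⟨hp.1.1 x, ?_⟩
    calc p x ≤ ∑ y, p y := Finset.single_le_sum (fun y _ => hp.1.1 y) (Finset.mem_univ x)
    _ = 1 := hp.1.2
  -- M is convex
  have hMconv : Convex ℝ M := by
    intro p hp q hq c d hc hd hcd
    rw [hM] at hp hq ⊢
    refine ⟨⟨fun x => ?_, ?_⟩, fun g hg => ?_⟩
    · have := hp.1.1 x; have := hq.1.1 x
      simp only [Pi.add_apply, Pi.smul_apply, smul_eq_mul]
      positivity
    · simp only [Pi.add_apply, Pi.smul_apply, smul_eq_mul]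
      rw [Finset.sum_add_distrib, ← Finset.mul_sum, ← Finset.mul_sum, hp.1.2, hq.1.2]
      linarith
    · rw [ip_add_left, ip_smul_left, ip_smul_left]
      have h1 := hp.2 g hg
      have h2 := hq.2 g hg
      have e : c * b g + d * b g = b g := by linear_combination (b g) * hcd
      linarith [mul_le_mul_of_nonneg_left h1 hc, mul_le_mul_of_nonneg_left h2 hd]
  rw [dLP]
  refine iSup₂_le fun h hh => ?_
  have hh' : h ≠ 0 := hh
  have hnrmh : 0 < nrm h := nrm_pos_of_ne h hh'
  -- the minimizing face of h in M
  obtain ⟨⟨p0, hp0M, hp0eq⟩, hlbE⟩ := hlE h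
  set Fh : Set (Ω → ℝ) := {p ∈ M | ip p h = lE h} with hFh
  have hp0Fh : p0 ∈ Fh := ⟨hp0M, hp0eq.symm⟩
  have hFhconv : Convex ℝ Fh := by
    intro p hp q hq c d hc hd hcd
    refine ⟨hMconv hp.1 hq.1 hc hd hcd, ?_⟩
    rw [ip_add_left, ip_smul_left, ip_smul_left, hp.2, hq.2]
    linear_combination (lE h) * hcd
  have hFhcpt : IsCompact Fh :=
    hMcpt.of_isClosed_subset
      (hMclosed.inter (isClosed_eq (continuous_ip_right h) continuous_const))
      (fun p hp => hp.1)
  have hFhext : IsExtreme ℝ M Fh := by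
    refine ⟨fun p hp => hp.1, ?_⟩
    intro x1 hx1 x2 hx2 x hxFh hxseg
    obtain ⟨c, d, hc, hd, hcd, hx⟩ := hxseg
    have s1 : lE h ≤ ip x1 h := hlbE ⟨x1, hx1, rfl⟩
    have s2 : lE h ≤ ip x2 h := hlbE ⟨x2, hx2, rfl⟩
    have hsum : c * ip x1 h + d * ip x2 h = lE h := by
      rw [← ip_smul_left, ← ip_smul_left, ← ip_add_left, hx, hxFh.2]
    have e : c * lE h + d * lE h = lE h := by linear_combination (lE h) * hcd
    have t1 : c * ip x1 h ≤ c * lE h := by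
      have := mul_le_mul_of_nonneg_left s2 hd.le
      linarith
    have t2 : d * ip x2 h ≤ d * lE h := by
      have := mul_le_mul_of_nonneg_left s1 hc.le
      linarith
    have e1 : ip x1 h = lE h := le_antisymm (le_of_mul_le_mul_left t1 hc) s1
    have e2 : ip x2 h = lE h := le_antisymm (le_of_mul_le_mul_left t2 hd) s2
    exact ⟨hx1, e1⟩
  -- extreme point of the face
  have hexne : (Set.extremePoints ℝ Fh).Nonempty := by
    by_contra hemp
    rw [Set.not_nonempty_iff_eq_empty] at hemp
    have hkm := closure_convexHull_extremePoints hFhcpt hFhconv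
    rw [hemp] at hkm
    simp only [convexHull_empty, closure_empty] at hkm
    rw [← hkm] at hp0Fh
    exact hp0Fh
  obtain ⟨E, hEexFh⟩ := hexne
  have hEFh : E ∈ Fh := extremePoints_subset hEexFh
  have hEM : E ∈ Set.extremePoints ℝ M := hFhext.extremePoints_subset_extremePoints hEexFh
  refine le_trans ?_ (le_biSup _ hEM)
  refine le_iInf₂ fun f hf => ?_
  -- the face M_f and the point q ∈ M' ∩ M_f
  set Mf : Set (Ω → ℝ) := {q ∈ M | ip q f = lE f} with hMf
  obtain ⟨⟨q, hqM', hqeq⟩, hlbP⟩ := hlP f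
  have hqMf : q ∈ Mf := by
    refine ⟨hM'M hqM', ?_⟩
    rw [← hqeq, hb' f hf, hcoh f hf]
  have hMfconv : Convex ℝ Mf := by
    intro p hp q' hq' c d hc hd hcd
    refine ⟨hMconv hp.1 hq'.1 hc hd hcd, ?_⟩
    rw [ip_add_left, ip_smul_left, ip_smul_left, hp.2, hq'.2]
    linear_combination (lE f) * hcd
  have hMfcpt : IsCompact Mf :=
    hMcpt.of_isClosed_subset
      (hMclosed.inter (isClosed_eq (continuous_ip_right f) continuous_const))
      (fun p hp => hp.1)
  set c : ℝ≥0∞ := ⨆ F ∈ Set.extremePoints ℝ Mf, ENNReal.ofReal (nrm (E - F)) with hc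
  by_cases hctop : c = ⊤
  · rw [hctop]; exact le_top
  -- all extreme points of Mf are within c.toReal of E
  set r : ℝ := c.toReal with hr
  have hFr : Set.extremePoints ℝ Mf ⊆ {z | nrm (E - z) ≤ r} := by
    intro F hF
    have : ENNReal.ofReal (nrm (E - F)) ≤ c :=
      le_biSup (fun F => ENNReal.ofReal (nrm (E - F))) hF
    rwa [ENNReal.ofReal_le_iff_le_toReal hctop] at this
  have hMfS : Mf ⊆ {z | nrm (E - z) ≤ r} := by
    have hkm := closure_convexHull_extremePoints hMfcpt hMfconv
    calc Mf = closure (convexHull ℝ (Set.extremePoints ℝ Mf)) := hkm.symm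
    _ ⊆ {z | nrm (E - z) ≤ r} := closure_minimal
        (convexHull_min hFr (convex_nrm_ball E r))
        (isClosed_le (continuous_nrm_sub E) continuous_const)
  have hqS : nrm (E - q) ≤ r := hMfS hqMf
  -- the key chain of inequalities
  have hlEh : ip E h = lE h := hEFh.2
  have hlPq : lP h ≤ ip q h := (hlP h).2 ⟨q, hqM', rfl⟩
  have hlElP : lE h ≤ lP h := by
    obtain ⟨q0, hq0, heq0⟩ := (hlP h).1
    rw [heq0]
    exact hlbE ⟨q0, hM'M hq0, rfl⟩
  have hchain : lP h - lE h ≤ r * nrm h := by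
    have h1 : ip q h - ip E h ≤ nrm (E - q) * nrm h := by
      have := ip_cs (q - E) h
      rw [ip_sub_left] at this
      rw [nrm_sub_comm]
      linarith
    have h2 : nrm (E - q) * nrm h ≤ r * nrm h :=
      mul_le_mul_of_nonneg_right hqS (nrm_nonneg h)
    linarith
  have hfinal : |lP h - lE h| / nrm h ≤ r := by
    rw [abs_of_nonneg (by linarith : (0:ℝ) ≤ lP h - lE h), div_le_iff₀ hnrmh]
    exact hchain
  calc ENNReal.ofReal (|lP h - lE h| / nrm h) ≤ ENNReal.ofReal r :=
        ENNReal.ofReal_le_ofReal hfinal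
  _ ≤ c := by rw [hr, ENNReal.ofReal_toReal hctop]
end
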